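/- arXiv:0709.4643 — 4 statements merged into one kernel-verified Lean document; each statement's English description precedes it below -/
import Mathlib

section
/- Suppose T₀/T₁ is an irrational number and there exists ξ ∈ x̃₀ such that the function t ↦ φ(t, ξ) is not constant. Then there do not exist T > 0, ε̂ > 0, w₀ ∈ [0, T₀] and a family (x_ε) for ε ∈ (0, ε̂) such that each x_ε : ℝ → ℝ² is a T-periodic solution of ẋ = ψ(x) + ε φ(t, x) and x_ε(t) → x₀(t + w₀) for every t ∈ ℝ as ε → 0⁺. (Theorem 4) -/
/-- **Theorem 4.**  Let `ψ : ℝ² → ℝ²` be twice continuously differentiable, let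
`φ : ℝ × ℝ² → ℝ²` be continuous and `T₁`-periodic in its first variable, and let
`x₀` be a periodic solution of `ẋ = ψ(x)` of least period `T₀ > 0`.
Suppose `T₀ / T₁` is irrational and there is `ξ` on the trajectory of `x₀` such
that `t ↦ φ t ξ` is not constant.  Then there do not exist `T > 0`, `ε̂ > 0`,
`w₀ ∈ [0, T₀]` and a family `x ε` (`ε ∈ (0, ε̂)`) of `T`-periodic solutions of
`ẋ = ψ(x) + ε φ(t, x)` with `x ε t → x₀ (t + w₀)` as `ε → 0⁺`. -/
theorem no_periodic_solutions_of_irrational_ratio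
    (ψ : EuclideanSpace ℝ (Fin 2) → EuclideanSpace ℝ (Fin 2))
    (hψ : ContDiff ℝ 2 ψ)
    (T₁ : ℝ) (hT₁ : 0 < T₁)
    (φ : ℝ → EuclideanSpace ℝ (Fin 2) → EuclideanSpace ℝ (Fin 2))
    (hφcont : Continuous fun p : ℝ × EuclideanSpace ℝ (Fin 2) => φ p.1 p.2)
    (hφper : ∀ t ξ, φ (t + T₁) ξ = φ t ξ)
    (T₀ : ℝ) (hT₀ : 0 < T₀)
    (x₀ : ℝ → EuclideanSpace ℝ (Fin 2))
    (hx₀sol : ∀ t : ℝ, HasDerivAt x₀ (ψ (x₀ t)) t)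
    (hx₀per : Function.Periodic x₀ T₀)
    (hx₀least : ∀ p : ℝ, 0 < p → Function.Periodic x₀ p → T₀ ≤ p)
    (hirr : Irrational (T₀ / T₁))
    (ξ : EuclideanSpace ℝ (Fin 2)) (hξ : ξ ∈ x₀ '' Set.Icc 0 T₀)
    (hφnonconst : ¬ ∃ c, ∀ t : ℝ, φ t ξ = c) :
    ¬ ∃ (T εhat : ℝ) (w₀ : ℝ) (x : ℝ → ℝ → EuclideanSpace ℝ (Fin 2)),
      0 < T ∧ 0 < εhat ∧ w₀ ∈ Set.Icc 0 T₀ ∧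
      (∀ ε ∈ Set.Ioo 0 εhat, ∀ t : ℝ,
        HasDerivAt (x ε) (ψ (x ε t) + ε • φ t (x ε t)) t) ∧
      (∀ ε ∈ Set.Ioo 0 εhat, Function.Periodic (x ε) T) ∧
      (∀ t : ℝ, Filter.Tendsto (fun ε => x ε t)
        (nhdsWithin 0 (Set.Ioi 0)) (nhds (x₀ (t + w₀)))) := by
  rintro ⟨T, εhat, w₀, x, hT, hε, hw₀, hsol, hper, hlim⟩
  have hmemIoo : Set.Ioo (0:ℝ) εhat ∈ nhdsWithin 0 (Set.Ioi 0) :=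
    Ioo_mem_nhdsGT_of_mem (by constructor <;> simp [hε, le_refl])
  -- Step A : x₀ is T-periodic
  have hTper : Function.Periodic x₀ T := by
    intro u
    have h1 : Filter.Tendsto (fun ε => x ε (u - w₀))
        (nhdsWithin 0 (Set.Ioi 0)) (nhds (x₀ (u - w₀ + w₀))) := hlim _
    have h2 : Filter.Tendsto (fun ε => x ε (u - w₀ + T))
        (nhdsWithin 0 (Set.Ioi 0)) (nhds (x₀ (u - w₀ + T + w₀))) := hlim _
    have heq : (fun ε => x ε (u - w₀ + T)) =ᶠ[nhdsWithin 0 (Set.Ioi 0)]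
        (fun ε => x ε (u - w₀)) := by
      filter_upwards [hmemIoo] with ε hεm
      exact hper ε hεm (u - w₀)
    have := tendsto_nhds_unique (h2.congr' heq) h1
    have e1 : u - w₀ + T + w₀ = u + T := by ring
    have e2 : u - w₀ + w₀ = u := by ring
    rw [e1, e2] at this
    exact this
  -- Step B : T = m * T₀ for a nonzero integer m
  obtain ⟨m, hm0, hmT⟩ : ∃ m : ℤ, m ≠ 0 ∧ T = m * T₀ := by
    set m : ℤ := ⌊T / T₀⌋ with hm
    have hr : T - m * T₀ = T₀ * Int.fract (T / T₀) := by
      rw [Int.fract]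
      field_simp
      ring
    have hr0 : 0 ≤ T - m * T₀ := by
      rw [hr]; exact mul_nonneg hT₀.le (Int.fract_nonneg _)
    have hrlt : T - m * T₀ < T₀ := by
      rw [hr]
      calc T₀ * Int.fract (T / T₀) < T₀ * 1 :=
        (mul_lt_mul_iff_right₀ hT₀).2 (Int.fract_lt_one _)
      _ = T₀ := mul_one _
    have hrper : Function.Periodic x₀ (T - m * T₀) := by
      intro u
      have : u + (T - m * T₀) = u + T - m * T₀ := by ring
      rw [this, hx₀per.sub_int_mul_eq m, hTper u]
    rcases eq_or_lt_of_le hr0 with hrz | hrpos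
    · refine ⟨m, ?_, by linarith⟩
      intro h0
      rw [h0] at hrz
      simp only [Int.cast_zero, zero_mul, sub_zero] at hrz
      exact absurd hrz.symm (ne_of_gt hT)
    · exact absurd (hx₀least _ hrpos hrper) (not_le.2 hrlt)
  -- Step C : T / T₁ is irrational
  have hTirr : Irrational (T / T₁) := by
    have : T / T₁ = (m : ℝ) * (T₀ / T₁) := by rw [hmT]; ring
    rw [this]
    exact hirr.intCast_mul hm0
  -- Step D : φ (t + T) (x₀ (t + w₀)) = φ t (x₀ (t + w₀))
  have H : ∀ t : ℝ, φ (t + T) (x₀ (t + w₀)) = φ t (x₀ (t + w₀)) := by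
    intro t
    have key : ∀ ε ∈ Set.Ioo (0:ℝ) εhat, φ (t + T) (x ε t) = φ t (x ε t) := by
      intro ε hεm
      have h1 := hsol ε hεm t
      have h2 := hsol ε hεm (t + T)
      have h3 : HasDerivAt (fun s => x ε (s + T))
          (ψ (x ε (t + T)) + ε • φ (t + T) (x ε (t + T))) t :=
        h2.comp_add_const t T
      have hfun : (fun s => x ε (s + T)) = x ε := funext fun s => hper ε hεm s
      rw [hfun] at h3
      have heq := h3.unique h1
      rw [hper ε hεm t] at heq
      have h4 : ε • φ (t + T) (x ε t) = ε • φ t (x ε t) := by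
        exact add_left_cancel heq
      exact smul_right_injective _ (ne_of_gt hεm.1) h4
    have hc1 : Continuous fun y => φ (t + T) y :=
      hφcont.comp (continuous_const.prodMk continuous_id)
    have hc2 : Continuous fun y => φ t y :=
      hφcont.comp (continuous_const.prodMk continuous_id)
    have l1 : Filter.Tendsto (fun ε => φ (t + T) (x ε t))
        (nhdsWithin 0 (Set.Ioi 0)) (nhds (φ (t + T) (x₀ (t + w₀)))) :=
      (hc1.continuousAt.tendsto).comp (hlim t)
    have l2 : Filter.Tendsto (fun ε => φ t (x ε t))
        (nhdsWithin 0 (Set.Ioi 0)) (nhds (φ t (x₀ (t + w₀)))) :=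
      (hc2.continuousAt.tendsto).comp (hlim t)
    have heq : (fun ε => φ (t + T) (x ε t)) =ᶠ[nhdsWithin 0 (Set.Ioi 0)]
        (fun ε => φ t (x ε t)) := by
      filter_upwards [hmemIoo] with ε hεm
      exact key ε hεm
    exact tendsto_nhds_unique (l1.congr' heq) l2
  -- Step E : φ (s - w₀ + n*T) ξ = φ (s - w₀) ξ for all n : ℤ
  obtain ⟨s, _, hs⟩ := hξ
  set c := φ (s - w₀) ξ with hc
  have hxs : ∀ n : ℤ, x₀ (s + n * T) = ξ := by
    intro n
    rw [← hs]
    exact (hTper.int_mul n) s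
  have hstep : ∀ r : ℝ, x₀ (s + r) = ξ →
      φ (s - w₀ + r + T) ξ = φ (s - w₀ + r) ξ := by
    intro r hr
    have h := H (s - w₀ + r)
    rw [show s - w₀ + r + w₀ = s + r by ring, hr] at h
    exact h
  have hn : ∀ n : ℤ, φ (s - w₀ + n * T) ξ = c := by
    intro n
    induction n using Int.induction_on with
    | zero => simp [hc]
    | succ k ih =>
      have hx : x₀ (s + (k : ℝ) * T) = ξ := by
        have := hxs (k : ℤ); push_cast at this; exact this
      have h := hstep ((k : ℝ) * T) hx
      push_cast at ih ⊢
      rw [show s - w₀ + ((k : ℝ) + 1) * T = s - w₀ + (k : ℝ) * T + T by ring, h]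
      exact ih
    | pred k ih =>
      have hx : x₀ (s + (-(k : ℝ) - 1) * T) = ξ := by
        have := hxs (-(k : ℤ) - 1); push_cast at this; exact this
      have h := hstep ((-(k : ℝ) - 1) * T) hx
      rw [show s - w₀ + (-(k : ℝ) - 1) * T + T = s - w₀ + (-(k : ℝ)) * T by ring] at h
      push_cast at ih ⊢
      rw [show s - w₀ + (-(k : ℝ) - 1) * T = s - w₀ + (-(k : ℝ) - 1) * T by ring, ← h]
      convert ih using 3
  have hnk : ∀ n k : ℤ, φ (s - w₀ + (n * T + k * T₁)) ξ = c := by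
    intro n k
    have hper1 : Function.Periodic (fun t => φ t ξ) T₁ := fun t => hφper t ξ
    have h2 : φ (s - w₀ + n * T + k * T₁) ξ = φ (s - w₀ + n * T) ξ :=
      (hper1.int_mul k) (s - w₀ + n * T)
    rw [show s - w₀ + ((n : ℝ) * T + (k : ℝ) * T₁) = s - w₀ + n * T + k * T₁ by ring,
      h2, hn n]
  -- Step F : density and conclusion
  have hTne : T ≠ 0 := ne_of_gt hT
  have hT₁ne : T₁ ≠ 0 := ne_of_gt hT₁
  -- the additive subgroup generated by T and T₁
  let S : AddSubgroup ℝ := AddSubgroup.closure {T, T₁}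
  have hdense : Dense (S : Set ℝ) := by
    rcases S.dense_or_cyclic with hd | ⟨a, ha⟩
    · exact hd
    · exfalso
      have hTmem : T ∈ S := AddSubgroup.subset_closure (by simp)
      have hT₁mem : T₁ ∈ S := AddSubgroup.subset_closure (by simp)
      rw [ha, AddSubgroup.mem_closure_singleton] at hTmem hT₁mem
      obtain ⟨p, hp⟩ := hTmem
      obtain ⟨q, hq⟩ := hT₁mem
      have hq0 : (q : ℝ) ≠ 0 := by
        rintro h0
        apply hT₁ne
        rw [← hq, zsmul_eq_mul, h0, zero_mul]
      have ha0 : a ≠ 0 := by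
        rintro rfl
        simp at hq
        exact hT₁ne hq.symm
      have : T / T₁ = (p : ℝ) / (q : ℝ) := by
        rw [← hp, ← hq, zsmul_eq_mul, zsmul_eq_mul]
        field_simp
      exact (hTirr.ne_rat ((p : ℚ) / (q : ℚ))) (by rw [this]; push_cast; ring)
  -- every element of S has the form n*T + k*T₁
  have hSform : ∀ g ∈ S, ∃ n k : ℤ, g = n * T + k * T₁ := by
    intro g hg
    induction hg using AddSubgroup.closure_induction with
    | mem y hy =>
      rcases hy with rfl | rfl
      · exact ⟨1, 0, by simp⟩
      · exact ⟨0, 1, by simp⟩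
    | zero => exact ⟨0, 0, by simp⟩
    | add y z _ _ hy hz =>
      obtain ⟨n₁, k₁, rfl⟩ := hy
      obtain ⟨n₂, k₂, rfl⟩ := hz
      exact ⟨n₁ + n₂, k₁ + k₂, by push_cast; ring⟩
    | neg y _ hy =>
      obtain ⟨n, k, rfl⟩ := hy
      exact ⟨-n, -k, by push_cast; ring⟩
  -- translate the dense set
  have hdense2 : Dense ((fun g => s - w₀ + g) '' (S : Set ℝ)) := by
    have hsurj : Function.Surjective (fun g : ℝ => s - w₀ + g) :=
      fun y => ⟨y - (s - w₀), by ring⟩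
    exact hsurj.denseRange.dense_image (by continuity) hdense
  have hconst : (fun t => φ t ξ) = fun _ => c := by
    apply Continuous.ext_on hdense2
    · exact hφcont.comp (continuous_id.prodMk continuous_const)
    · exact continuous_const
    · rintro t ⟨g, hg, rfl⟩
      obtain ⟨n, k, rfl⟩ := hSform g hg
      exact hnk n k
  exact hφnonconst ⟨c, fun t => congrFun hconst t⟩
end

section
/- Assume ⟨F(s, θ), f(θ)⟩ ≠ 0 for all s ∈ ℝ and all θ ∈ [0, T₀]. Then η(T, s, x₀(θ)) − η(0, s, x₀(θ)) ≠ 0 for every s ∈ [0, T] and every θ ∈ [0, T₀], i.e., condition (A₂) of Theorem 1 holds on the trajectory x̃₀. (nonvanishing part of Theorem 3) -/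
open scoped RealInnerProductSpace

/-- The 2×2 real matrix with columns `a` and `b`. -/
noncomputable def columnsMatrix (a b : EuclideanSpace ℝ (Fin 2)) :
    Matrix (Fin 2) (Fin 2) ℝ := !![a 0, b 0; a 1, b 1]

private lemma euclid_comp_hasDerivAt {f : ℝ → EuclideanSpace ℝ (Fin 2)}
    {d : EuclideanSpace ℝ (Fin 2)} {t : ℝ} (h : HasDerivAt f d t) (i : Fin 2) :
    HasDerivAt (fun u => f u i) (d i) t := by
  have := (EuclideanSpace.proj (𝕜 := ℝ) i).hasFDerivAt.comp_hasDerivAt t h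
  exact this

private lemma euclid_hasDerivAt_of_comp {f : ℝ → EuclideanSpace ℝ (Fin 2)}
    {d : EuclideanSpace ℝ (Fin 2)} {t : ℝ}
    (h : ∀ i, HasDerivAt (fun u => f u i) (d i) t) : HasDerivAt f d t := by
  have h1 : HasDerivAt (fun u => (EuclideanSpace.equiv (Fin 2) ℝ) (f u))
      ((EuclideanSpace.equiv (Fin 2) ℝ) d) t := hasDerivAt_pi.2 h
  have h2 := ((EuclideanSpace.equiv (Fin 2) ℝ).symm :
      (Fin 2 → ℝ) →L[ℝ] EuclideanSpace ℝ (Fin 2)).hasFDerivAt.comp_hasDerivAt t h1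
  exact h2

private lemma euclid_continuous_of_comp {f : ℝ → EuclideanSpace ℝ (Fin 2)}
    (h : ∀ i, Continuous fun u => f u i) : Continuous f := by
  have h1 : Continuous fun u => (EuclideanSpace.equiv (Fin 2) ℝ) (f u) := continuous_pi h
  exact (PiLp.continuous_toLp 2 _).comp (continuous_pi h)

private lemma hasDerivAt_comp_shift {f : ℝ → EuclideanSpace ℝ (Fin 2)}
    {d : EuclideanSpace ℝ (Fin 2)} {t c : ℝ} (h : HasDerivAt f d (t + c)) :
    HasDerivAt (fun u => f (u + c)) d t := by
  have := HasDerivAt.scomp t h ((hasDerivAt_id t).add_const c)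
  rw [one_smul] at this
  exact this

private lemma columnsMatrix_mulVec (a b : EuclideanSpace ℝ (Fin 2)) (v : Fin 2 → ℝ) :
    WithLp.toLp 2 ((columnsMatrix a b).mulVec v) = v 0 • a + v 1 • b := by
  ext i
  fin_cases i <;>
    simp [columnsMatrix, Matrix.mulVec, dotProduct, Fin.sum_univ_two] <;> ring

private lemma clm_columnsMatrix_mulVec
    (B : EuclideanSpace ℝ (Fin 2) →L[ℝ] EuclideanSpace ℝ (Fin 2))
    (a b : EuclideanSpace ℝ (Fin 2)) (v : Fin 2 → ℝ) :
    WithLp.toLp 2 ((columnsMatrix (B a) (B b)).mulVec v) =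
      B (WithLp.toLp 2 ((columnsMatrix a b).mulVec v)) := by
  simp only [columnsMatrix_mulVec, map_add, map_smul]

private lemma hasDerivAt_matrix_mulVec {Mf : ℝ → Matrix (Fin 2) (Fin 2) ℝ}
    {M' : Matrix (Fin 2) (Fin 2) ℝ} {V : ℝ → EuclideanSpace ℝ (Fin 2)}
    {V' : EuclideanSpace ℝ (Fin 2)} {t : ℝ} {g : ℝ → EuclideanSpace ℝ (Fin 2)}
    {d : EuclideanSpace ℝ (Fin 2)}
    (hg : ∀ u, g u = WithLp.toLp 2 ((Mf u).mulVec (V u)))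
    (hd : d = WithLp.toLp 2 (M'.mulVec (V t)) + WithLp.toLp 2 ((Mf t).mulVec V'))
    (hM : ∀ i j, HasDerivAt (fun u => Mf u i j) (M' i j) t)
    (hV : HasDerivAt V V' t) :
    HasDerivAt g d t := by
  apply euclid_hasDerivAt_of_comp
  intro i
  have hV0 := euclid_comp_hasDerivAt hV 0
  have hV1 := euclid_comp_hasDerivAt hV 1
  have h := ((hM i 0).mul hV0).add ((hM i 1).mul hV1)
  have hfun : (fun u => g u i) = fun u => Mf u i 0 * V u 0 + Mf u i 1 * V u 1 := by
    funext u
    rw [hg u]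
    simp [Matrix.mulVec, dotProduct, Fin.sum_univ_two]
  rw [hfun]
  have hdi : d i = M' i 0 * V t 0 + Mf t i 0 * V' 0 + (M' i 1 * V t 1 + Mf t i 1 * V' 1) := by
    rw [hd]
    simp [Matrix.mulVec, dotProduct, Fin.sum_univ_two]
    fin_cases i <;> simp <;> ring
  rw [hdi]
  exact h

private lemma lipschitzWith_add_const {K : NNReal} {f : EuclideanSpace ℝ (Fin 2) → EuclideanSpace ℝ (Fin 2)}
    (h : LipschitzWith K f) (c : EuclideanSpace ℝ (Fin 2)) :
    LipschitzWith K (fun x => f x + c) := by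
  intro x y
  simpa [edist_add_right] using h x y

/-- **Nonvanishing part of Theorem 3.**  With `x₀` a periodic solution of the
planar system `ẋ = ψ(x)` of least period `T₀`, `y` a solution of the linearized
system `ẏ = ψ'(x₀(t)) y` linearly independent of `ẋ₀`, `T = k l T₀`, and
`F(s,θ) = ∫_{s-T}^{s} (ẋ₀(τ) y(τ))⁻¹ φ(τ-θ, x₀(τ)) dτ`:  if
`⟨F(s,θ), f(θ)⟩ ≠ 0` for all `s ∈ ℝ` and `θ ∈ [0,T₀]`, then
`η(T,s,x₀(θ)) − η(0,s,x₀(θ)) ≠ 0` for all `s ∈ [0,T]`, `θ ∈ [0,T₀]`. -/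
theorem eta_difference_nonvanishing_on_cycle
    (ψ : EuclideanSpace ℝ (Fin 2) → EuclideanSpace ℝ (Fin 2))
    (hψ : ContDiff ℝ 2 ψ)
    (T₁ : ℝ) (hT₁ : 0 < T₁)
    (φ : ℝ → EuclideanSpace ℝ (Fin 2) → EuclideanSpace ℝ (Fin 2))
    (hφcont : Continuous fun p : ℝ × EuclideanSpace ℝ (Fin 2) => φ p.1 p.2)
    (hφper : ∀ t ξ, φ (t + T₁) ξ = φ t ξ)
    (T₀ : ℝ) (hT₀ : 0 < T₀)
    (x₀ : ℝ → EuclideanSpace ℝ (Fin 2))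
    (hx₀sol : ∀ t : ℝ, HasDerivAt x₀ (ψ (x₀ t)) t)
    (hx₀per : Function.Periodic x₀ T₀)
    (hx₀least : ∀ p : ℝ, 0 < p → Function.Periodic x₀ p → T₀ ≤ p)
    (l k : ℕ) (hl : Nat.Prime l) (hk : Nat.Prime k)
    (hratio : T₀ / T₁ = (l : ℝ) / (k : ℝ))
    (T : ℝ) (hT : T = (k : ℝ) * l * T₀)
    (Ω : ℝ → ℝ → EuclideanSpace ℝ (Fin 2) → EuclideanSpace ℝ (Fin 2))
    (hΩinit : ∀ t₀ ξ, Ω t₀ t₀ ξ = ξ)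
    (hΩsol : ∀ t₀ ξ t, HasDerivAt (fun s => Ω s t₀ ξ) (ψ (Ω t t₀ ξ)) t)
    (η : ℝ → ℝ → EuclideanSpace ℝ (Fin 2) → EuclideanSpace ℝ (Fin 2))
    (hηinit : ∀ s ξ, η s s ξ = 0)
    (hηsol : ∀ s ξ t, HasDerivAt (fun u => η u s ξ)
      (fderiv ℝ ψ (Ω t 0 ξ) (η t s ξ) + φ t (Ω t 0 ξ)) t)
    (y : ℝ → EuclideanSpace ℝ (Fin 2))
    (hysol : ∀ t : ℝ, HasDerivAt y (fderiv ℝ ψ (x₀ t) (y t)) t)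
    (hyindep : ∀ t : ℝ, (columnsMatrix (ψ (x₀ t)) (y t)).det ≠ 0)
    (f : ℝ → EuclideanSpace ℝ (Fin 2))
    (F : ℝ → ℝ → EuclideanSpace ℝ (Fin 2))
    (hF : ∀ s θ : ℝ, F s θ = ∫ τ in (s - T)..s,
      (WithLp.toLp 2 ((columnsMatrix (ψ (x₀ τ)) (y τ))⁻¹.mulVec (φ (τ - θ) (x₀ τ))) :
        EuclideanSpace ℝ (Fin 2)))
    (hB₂ : ∀ s : ℝ, ∀ θ ∈ Set.Icc 0 T₀, ⟪F s θ, f θ⟫ ≠ (0 : ℝ)) :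
    ∀ s ∈ Set.Icc 0 T, ∀ θ ∈ Set.Icc 0 T₀,
      η T s (x₀ θ) - η 0 s (x₀ θ) ≠ 0 := by
  intro s hs θ hθ h0
  obtain ⟨hs0, hsT⟩ := hs
  set ξ := x₀ θ with hξ
  -- basic continuity and positivity facts
  have hx₀c : Continuous x₀ := continuous_iff_continuousAt.2 fun t => (hx₀sol t).continuousAt
  have hyc : Continuous y := continuous_iff_continuousAt.2 fun t => (hysol t).continuousAt
  have hψd : Differentiable ℝ ψ := hψ.differentiable (by norm_num)
  have hfdc : Continuous (fderiv ℝ ψ) := hψ.continuous_fderiv (by norm_num)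
  have hkpos : (0:ℝ) < k := by exact_mod_cast hk.pos
  have hlpos : (0:ℝ) < l := by exact_mod_cast hl.pos
  have hTpos : 0 < T := by rw [hT]; exact mul_pos (mul_pos hkpos hlpos) hT₀
  -- periodicity with period T
  have hxT : ∀ t, x₀ (t + T) = x₀ t := by
    intro t
    have h := hx₀per.nat_mul (k * l) t
    rwa [show ((k * l : ℕ) : ℝ) * T₀ = T by rw [hT]; push_cast; ring] at h
  have hφT : ∀ t x, φ (t + T) x = φ t x := by
    have hk0 : (k:ℝ) ≠ 0 := ne_of_gt hkpos
    have h1 : T₀ * k = l * T₁ := by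
      rw [div_eq_div_iff (ne_of_gt hT₁) hk0] at hratio
      exact hratio
    intro t x
    have hp : Function.Periodic (fun u => φ u x) T₁ := fun u => hφper u x
    have h := hp.nat_mul (l ^ 2) t
    rwa [show ((l ^ 2 : ℕ) : ℝ) * T₁ = T by rw [hT]; push_cast; linear_combination (-(l:ℝ)) * h1] at h
  -- the flow through ξ = x₀ θ is t ↦ x₀ (t + θ)
  set b := s + T with hbdef
  have hb0 : (0:ℝ) ≤ b := by linarith
  have hΩc : Continuous fun t => Ω t 0 ξ :=
    continuous_iff_continuousAt.2 fun t => (hΩsol 0 ξ t).continuousAt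
  have hq : ∀ t : ℝ, HasDerivAt (fun u => x₀ (u + θ)) (ψ (x₀ (t + θ))) t :=
    fun t => hasDerivAt_comp_shift (hx₀sol (t + θ))
  have hqc : Continuous fun u => x₀ (u + θ) := hx₀c.comp (continuous_id.add continuous_const)
  have hKcomp : IsCompact ((fun t => Ω t 0 ξ) '' Set.Icc 0 b ∪
      (fun u => x₀ (u + θ)) '' Set.Icc 0 b) :=
    ((isCompact_Icc.image hΩc).union (isCompact_Icc.image hqc))
  obtain ⟨R, hR⟩ := hKcomp.isBounded.subset_closedBall 0
  obtain ⟨C, hC⟩ := (isCompact_closedBall (0 : EuclideanSpace ℝ (Fin 2)) R).exists_bound_of_continuousOn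
    hfdc.continuousOn
  have hlip : LipschitzOnWith (Real.toNNReal C) ψ (Metric.closedBall 0 R) := by
    apply (convex_closedBall _ _).lipschitzOnWith_of_nnnorm_fderiv_le (fun x _ => hψd x)
    intro x hx
    rw [← norm_toNNReal]
    exact Real.toNNReal_mono (hC x hx)
  have hflow : ∀ t ∈ Set.Icc 0 b, Ω t 0 ξ = x₀ (t + θ) := by
    have := ODE_solution_unique_of_mem_Icc_right
      (v := fun _ x => ψ x) (s := fun _ => Metric.closedBall 0 R) (K := Real.toNNReal C)
      (fun _ _ => hlip)
      hΩc.continuousOn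
      (fun t _ => (hΩsol 0 ξ t).hasDerivWithinAt)
      (fun t ht => hR (Set.mem_union_left _
        (Set.mem_image_of_mem _ (Set.Ico_subset_Icc_self ht))))
      hqc.continuousOn
      (fun t _ => (hq t).hasDerivWithinAt)
      (fun t ht => hR (Set.mem_union_right _
        (Set.mem_image_of_mem _ (Set.Ico_subset_Icc_self ht))))
      (by simp [hΩinit, hξ])
    exact fun t ht => this ht
  -- η facts along the flow
  have hηc : Continuous fun u => η u s ξ :=
    continuous_iff_continuousAt.2 fun t => (hηsol s ξ t).continuousAt
  have hηode : ∀ t ∈ Set.Icc 0 b, HasDerivAt (fun u => η u s ξ)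
      (fderiv ℝ ψ (x₀ (t + θ)) (η t s ξ) + φ t (x₀ (t + θ))) t := by
    intro t ht
    have h := hηsol s ξ t
    rwa [hflow t ht] at h
  -- step: η (s + T) s ξ = 0 via the homogeneous equation for w
  have hwc : Continuous fun t => η (t + T) s ξ - η t s ξ :=
    (hηc.comp (continuous_id.add continuous_const)).sub hηc
  have hwode : ∀ t ∈ Set.Icc 0 s, HasDerivAt (fun u => η (u + T) s ξ - η u s ξ)
      (fderiv ℝ ψ (x₀ (t + θ)) (η (t + T) s ξ - η t s ξ)) t := by
    intro t ht
    have ht' : t + T ∈ Set.Icc 0 b := by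
      constructor
      · linarith [ht.1, hTpos.le]
      · rw [hbdef]; linarith [ht.2]
    have h := hηsol s ξ (t + T)
    rw [hflow _ ht', show t + T + θ = (t + θ) + T by ring, hxT (t + θ),
      hφT t (x₀ (t + θ))] at h
    have h1 := hasDerivAt_comp_shift h
    have h2 := hηode t ⟨ht.1, by rw [hbdef]; linarith [ht.2, hTpos.le]⟩
    have h3 := h1.sub h2
    refine h3.congr_deriv ?_
    rw [map_sub]
    abel
  -- uniqueness for the homogeneous linear equation on [0, s]
  have hAc : Continuous fun u => fderiv ℝ ψ (x₀ u) := hfdc.comp hx₀c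
  have hη0 : η (s + T) s ξ = 0 := by
    rcases eq_or_lt_of_le hs0 with hseq | hspos
    · rw [← hseq] at h0 ⊢
      rw [hηinit 0 ξ, sub_zero] at h0
      rw [show (0:ℝ) + T = T from zero_add T]
      exact h0
    set c1 : ℝ → ℝ := fun t => max 0 (min t s) with hc1
    have hc1mem : ∀ t, c1 t ∈ Set.Icc 0 s := fun t =>
      ⟨le_max_left _ _, max_le hs0 (min_le_right _ _)⟩
    have hc1eq : ∀ t ∈ Set.Ico 0 s, c1 t = t := fun t ht => by
      rw [hc1]; dsimp only; rw [min_eq_left ht.2.le, max_eq_right ht.1]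
    obtain ⟨C₁, hC₁⟩ := (isCompact_Icc (a := θ) (b := s + θ)).exists_bound_of_continuousOn
      hAc.continuousOn
    have hv₁ : ∀ t : ℝ, LipschitzOnWith (Real.toNNReal C₁)
        (fun x => fderiv ℝ ψ (x₀ (c1 t + θ)) x) Set.univ := by
      intro t
      have hm : c1 t + θ ∈ Set.Icc θ (s + θ) := by
        have := hc1mem t
        exact ⟨by linarith [this.1], by linarith [this.2]⟩
      have hle : ‖fderiv ℝ ψ (x₀ (c1 t + θ))‖₊ ≤ Real.toNNReal C₁ := by
        rw [← norm_toNNReal]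
        exact Real.toNNReal_mono (hC₁ _ hm)
      exact ((fderiv ℝ ψ (x₀ (c1 t + θ))).lipschitz.weaken hle).lipschitzOnWith
    have huniq := ODE_solution_unique_of_mem_Icc_right
      (v := fun t x => fderiv ℝ ψ (x₀ (c1 t + θ)) x) (s := fun _ => Set.univ)
      (K := Real.toNNReal C₁) (fun t _ => hv₁ t)
      hwc.continuousOn
      (fun t ht => by
        show HasDerivWithinAt (fun u => η (u + T) s ξ - η u s ξ)
          (fderiv ℝ ψ (x₀ (c1 t + θ)) (η (t + T) s ξ - η t s ξ)) (Set.Ici t) t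
        rw [hc1eq t ht]
        exact (hwode t (Set.Ico_subset_Icc_self ht)).hasDerivWithinAt)
      (fun _ _ => trivial)
      (continuousOn_const (c := (0 : EuclideanSpace ℝ (Fin 2))))
      (fun t _ => by
        simpa using (hasDerivAt_const t (0 : EuclideanSpace ℝ (Fin 2))).hasDerivWithinAt)
      (fun _ _ => trivial)
      (by simpa [zero_add] using h0)
    have := huniq (Set.right_mem_Icc.2 hs0)
    simp only [hηinit, sub_zero] at this
    exact this
  -- matrices along the orbit
  set M : ℝ → Matrix (Fin 2) (Fin 2) ℝ := fun u => columnsMatrix (ψ (x₀ u)) (y u) with hMdef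
  have hMapp : ∀ u, M u = columnsMatrix (ψ (x₀ u)) (y u) := fun u => by rw [hMdef]
  have hdet : ∀ u, IsUnit (M u).det := fun u => by
    rw [hMapp]; exact isUnit_iff_ne_zero.2 (hyindep u)
  have hψx₀c : Continuous fun u => ψ (x₀ u) := hψ.continuous.comp hx₀c
  have hψ0 : ∀ i : Fin 2, Continuous fun u => ψ (x₀ u) i := fun i => by
    exact (EuclideanSpace.proj (𝕜 := ℝ) i).continuous.comp hψx₀c
  have hy0 : ∀ i : Fin 2, Continuous fun u => y u i := fun i => by
    exact (EuclideanSpace.proj (𝕜 := ℝ) i).continuous.comp hyc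
  have hMc : ∀ i j, Continuous fun u => M u i j := by
    intro i j
    simp only [hMdef, columnsMatrix]
    fin_cases i <;> fin_cases j <;>
      simp only [Matrix.cons_val', Matrix.cons_val_zero, Matrix.cons_val_one,
        Matrix.head_cons, Matrix.empty_val', Matrix.cons_val_fin_one, Matrix.head_fin_const] <;>
      first
        | exact hψ0 0
        | exact hψ0 1
        | exact hy0 0
        | exact hy0 1
  have hdetc : Continuous fun u => (M u).det := by
    simp only [Matrix.det_fin_two]
    exact ((hMc 0 0).mul (hMc 1 1)).sub ((hMc 0 1).mul (hMc 1 0))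
  have hdetne : ∀ u, (M u).det ≠ 0 := fun u => by rw [hMapp]; exact hyindep u
  have hdetinvc : Continuous fun u => ((M u).det)⁻¹ := hdetc.inv₀ hdetne
  have hMinvc : ∀ i j, Continuous fun u => (M u)⁻¹ i j := by
    intro i j
    have hinv : ∀ u, (M u)⁻¹ = ((M u).det)⁻¹ • (M u).adjugate := fun u => by
      rw [Matrix.inv_def, Ring.inverse_eq_inv']
    simp only [hinv, Matrix.smul_apply, smul_eq_mul, Matrix.adjugate_fin_two]
    fin_cases i <;> fin_cases j <;>
      simp only [Matrix.cons_val', Matrix.cons_val_zero, Matrix.cons_val_one,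
        Matrix.head_cons, Matrix.empty_val', Matrix.cons_val_fin_one, Matrix.head_fin_const] <;>
      first
        | exact hdetinvc.mul (hMc 1 1)
        | exact hdetinvc.mul ((hMc 0 1).neg)
        | exact hdetinvc.mul ((hMc 1 0).neg)
        | exact hdetinvc.mul (hMc 0 0)
  -- the inhomogeneity and the primitive V
  have hφc2 : Continuous fun τ => φ τ (x₀ (τ + θ)) :=
    hφcont.comp (continuous_id.prodMk (hx₀c.comp (continuous_id.add continuous_const)))
  have hφ0 : ∀ i : Fin 2, Continuous fun τ => φ τ (x₀ (τ + θ)) i := fun i => by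
    exact (EuclideanSpace.proj (𝕜 := ℝ) i).continuous.comp hφc2
  set G : ℝ → EuclideanSpace ℝ (Fin 2) :=
    fun τ => WithLp.toLp 2 ((M (τ + θ))⁻¹.mulVec (φ τ (x₀ (τ + θ)))) with hGdef
  have hshiftc : Continuous fun τ : ℝ => τ + θ := continuous_id.add continuous_const
  have hGc : Continuous G := by
    apply euclid_continuous_of_comp
    intro i
    show Continuous fun τ => ((M (τ + θ))⁻¹.mulVec (φ τ (x₀ (τ + θ)))) i
    simp only [Matrix.mulVec, dotProduct, Fin.sum_univ_two]
    exact (((hMinvc i 0).comp hshiftc).mul (hφ0 0)).add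
      (((hMinvc i 1).comp hshiftc).mul (hφ0 1))
  set V : ℝ → EuclideanSpace ℝ (Fin 2) := fun r => ∫ τ in s..r, G τ with hVdef
  have hVd : ∀ t : ℝ, HasDerivAt V (G t) t := fun t =>
    intervalIntegral.integral_hasDerivAt_right (hGc.intervalIntegrable _ _)
      (hGc.stronglyMeasurableAtFilter _ _) hGc.continuousAt
  -- the candidate solution g2 = M(t+θ) ⬝ V(t)
  set g2 : ℝ → EuclideanSpace ℝ (Fin 2) :=
    fun r => WithLp.toLp 2 ((M (r + θ)).mulVec (V r)) with hg2def
  have hcol0 : ∀ u : ℝ, HasDerivAt (fun r => ψ (x₀ r)) (fderiv ℝ ψ (x₀ u) (ψ (x₀ u))) u :=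
    fun u => (hψd (x₀ u)).hasFDerivAt.comp_hasDerivAt u (hx₀sol u)
  have hgd : ∀ t : ℝ, HasDerivAt g2
      (fderiv ℝ ψ (x₀ (t + θ)) (g2 t) + φ t (x₀ (t + θ))) t := by
    intro t
    apply hasDerivAt_matrix_mulVec (Mf := fun u => M (u + θ))
      (M' := columnsMatrix (fderiv ℝ ψ (x₀ (t + θ)) (ψ (x₀ (t + θ))))
        (fderiv ℝ ψ (x₀ (t + θ)) (y (t + θ))))
      (V := V) (V' := G t)
    · intro u; rw [hg2def]
    · -- derivative identification
      simp only [hg2def, hGdef, hMapp]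
      rw [clm_columnsMatrix_mulVec, WithLp.ofLp_toLp, Matrix.mulVec_mulVec,
        Matrix.mul_nonsing_inv _ (by rw [← hMapp]; exact hdet (t + θ)), Matrix.one_mulVec]
    · intro i j
      simp only [hMapp, columnsMatrix]
      fin_cases i <;> fin_cases j <;>
        simp only [Matrix.cons_val', Matrix.cons_val_zero, Matrix.cons_val_one,
          Matrix.head_cons, Matrix.empty_val', Matrix.cons_val_fin_one, Matrix.head_fin_const] <;>
        first
          | exact euclid_comp_hasDerivAt (hasDerivAt_comp_shift (hcol0 (t + θ))) 0
          | exact euclid_comp_hasDerivAt (hasDerivAt_comp_shift (hcol0 (t + θ))) 1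
          | exact euclid_comp_hasDerivAt (hasDerivAt_comp_shift (hysol (t + θ))) 0
          | exact euclid_comp_hasDerivAt (hasDerivAt_comp_shift (hysol (t + θ))) 1
    · exact hVd t
  -- identify g2 with η on [s, b]
  have hsb : s ≤ b := by rw [hbdef]; linarith
  set c2 : ℝ → ℝ := fun t => max s (min t b) with hc2
  have hc2mem : ∀ t, c2 t ∈ Set.Icc s b := fun t =>
    ⟨le_max_left _ _, max_le hsb (min_le_right _ _)⟩
  have hc2eq : ∀ t ∈ Set.Ico s b, c2 t = t := fun t ht => by
    rw [hc2]; dsimp only; rw [min_eq_left ht.2.le, max_eq_right ht.1]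
  obtain ⟨C₂, hC₂⟩ := (isCompact_Icc (a := s + θ) (b := b + θ)).exists_bound_of_continuousOn
    hAc.continuousOn
  have hv₂ : ∀ t : ℝ, LipschitzOnWith (Real.toNNReal C₂)
      (fun x => fderiv ℝ ψ (x₀ (c2 t + θ)) x + φ (c2 t) (x₀ (c2 t + θ))) Set.univ := by
    intro t
    have hm : c2 t + θ ∈ Set.Icc (s + θ) (b + θ) := by
      have := hc2mem t
      exact ⟨by linarith [this.1], by linarith [this.2]⟩
    have hle : ‖fderiv ℝ ψ (x₀ (c2 t + θ))‖₊ ≤ Real.toNNReal C₂ := by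
      rw [← norm_toNNReal]
      exact Real.toNNReal_mono (hC₂ _ hm)
    exact (lipschitzWith_add_const ((fderiv ℝ ψ (x₀ (c2 t + θ))).lipschitz.weaken hle)
      (φ (c2 t) (x₀ (c2 t + θ)))).lipschitzOnWith
  have hg2c : Continuous g2 := continuous_iff_continuousAt.2 fun t => (hgd t).continuousAt
  have hVs : V s = 0 := by rw [hVdef]; exact intervalIntegral.integral_same
  have hg2s : g2 s = η s s ξ := by
    rw [hg2def]
    dsimp only
    rw [hVs, hηinit]
    ext i
    simp [Matrix.mulVec, dotProduct, Fin.sum_univ_two]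
  have hg2eq : Set.EqOn g2 (fun u => η u s ξ) (Set.Icc s b) :=
    ODE_solution_unique_of_mem_Icc_right
      (v := fun t x => fderiv ℝ ψ (x₀ (c2 t + θ)) x + φ (c2 t) (x₀ (c2 t + θ)))
      (s := fun _ => Set.univ) (K := Real.toNNReal C₂) (fun t _ => hv₂ t)
      hg2c.continuousOn
      (fun t ht => by
        show HasDerivWithinAt g2
          (fderiv ℝ ψ (x₀ (c2 t + θ)) (g2 t) + φ (c2 t) (x₀ (c2 t + θ))) (Set.Ici t) t
        rw [hc2eq t ht]
        exact (hgd t).hasDerivWithinAt)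
      (fun _ _ => trivial)
      hηc.continuousOn
      (fun t ht => by
        show HasDerivWithinAt (fun u => η u s ξ)
          (fderiv ℝ ψ (x₀ (c2 t + θ)) (η t s ξ) + φ (c2 t) (x₀ (c2 t + θ))) (Set.Ici t) t
        rw [hc2eq t ht]
        exact (hηode t ⟨by linarith [ht.1], ht.2.le⟩).hasDerivWithinAt)
      (fun _ _ => trivial)
      hg2s
  have hg2b : g2 b = 0 := by
    have := hg2eq (Set.right_mem_Icc.2 hsb)
    rw [this]
    rw [hbdef]
    exact hη0
  -- hence V b = 0
  have hVb : V b = 0 := by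
    have h1 : WithLp.toLp 2 ((M (b + θ)).mulVec (V b)) = 0 := hg2b
    have h2 := congrArg (fun z : EuclideanSpace ℝ (Fin 2) =>
      ((M (b + θ))⁻¹.mulVec z)) h1
    dsimp only at h2
    rw [Matrix.mulVec_mulVec, Matrix.nonsing_inv_mul _ (hdet (b + θ)),
      Matrix.one_mulVec] at h2
    rw [show V b = _ from congrArg (WithLp.toLp 2) h2]
    ext i
    simp [Matrix.mulVec, dotProduct, Fin.sum_univ_two]
  -- conclude : F (b + θ) θ = 0, contradicting hB₂
  have hFeq : F (b + θ) θ = 0 := by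
    rw [hF (b + θ) θ, show b + θ - T = s + θ by rw [hbdef]; ring]
    have hcv := intervalIntegral.integral_comp_add_right
      (f := fun τ => (WithLp.toLp 2 ((columnsMatrix (ψ (x₀ τ)) (y τ))⁻¹.mulVec (φ (τ - θ) (x₀ τ))) :
        EuclideanSpace ℝ (Fin 2))) (a := s) (b := b) θ
    rw [← hcv]
    beta_reduce
    simp only [add_sub_cancel_right, ← hMapp]
    have hkey := ContinuousLinearMap.intervalIntegral_comp_comm
      ((EuclideanSpace.equiv (Fin 2) ℝ).toContinuousLinearMap) (hGc.intervalIntegrable (μ := MeasureTheory.volume) s b)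
    have hkeyx : (∫ x in s..b, ((M (x + θ))⁻¹.mulVec (φ x (x₀ (x + θ))) : Fin 2 → ℝ))
        = (EuclideanSpace.equiv (Fin 2) ℝ).toContinuousLinearMap (∫ x in s..b, G x) := hkey
    have h2 : (∫ x in s..b, G x) = 0 := by
      simp only [hVdef, hGdef] at hVb
      simp only [hGdef]
      exact hVb
    rw [h2, map_zero] at hkeyx
    exact h2
  exact hB₂ (b + θ) θ hθ (by simp [hFeq])
end

section
/- Assume condition (A₀). Then there exists γ₀ > 0 such that the system ẋ = ψ(x) has no T₀-periodic solution x whose initial value ξ = x(0) satisfies 0 < dist(ξ, x̃₀) < γ₀. (isolation of the limit cycle; existence of the constant γ₀ of Definition 1) -/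
open Set Metric Function Filter Real intervalIntegral
open scoped NNReal Topology

section aux

variable {E : Type*} [NormedAddCommGroup E] [NormedSpace ℝ E]
variable {F : Type*} [NormedAddCommGroup F] [NormedSpace ℝ F]

/-- A `C¹` map is Lipschitz on a compact convex set. -/
lemma lipschitzOnWith_of_contDiff_one {f : E → F} (hf : ContDiff ℝ 1 f)
    {s : Set E} (hs : IsCompact s) (hconv : Convex ℝ s) :
    ∃ L : ℝ≥0, LipschitzOnWith L f s := by
  have hcont : ContinuousOn (fderiv ℝ f) s := (hf.continuous_fderiv one_ne_zero).continuousOn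
  obtain ⟨C, hC⟩ := hs.exists_bound_of_continuousOn hcont
  refine ⟨C.toNNReal, hconv.lipschitzOnWith_of_nnnorm_fderiv_le
    (fun x _ => (hf.differentiable one_ne_zero).differentiableAt) (fun x hx => ?_)⟩
  have h1 : ‖fderiv ℝ f x‖₊ = ‖fderiv ℝ f x‖.toNNReal := by
    simp [Real.toNNReal, nnnorm]
  rw [h1]
  exact Real.toNNReal_mono (hC x hx)

variable [ProperSpace E] in
/-- On a trajectory of a least-period `T₀` periodic orbit, the vector field never vanishes. -/
lemma psi_ne_zero_on_cycle {ψ : E → E} (hψ : ContDiff ℝ 1 ψ) {T₀ : ℝ} (hT₀ : 0 < T₀)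
    {x₀ : ℝ → E} (hx₀sol : ∀ t, HasDerivAt x₀ (ψ (x₀ t)) t)
    (hx₀least : ∀ p : ℝ, 0 < p → Function.Periodic x₀ p → T₀ ≤ p) :
    ∀ t, ψ (x₀ t) ≠ 0 := by
  intro t₁ h0
  set c := x₀ t₁ with hc
  obtain ⟨L, hL⟩ := lipschitzOnWith_of_contDiff_one hψ (isCompact_closedBall c 1)
    (convex_closedBall c 1)
  have hx₀cont : Continuous x₀ :=
    continuous_iff_continuousAt.mpr fun t => (hx₀sol t).continuousAt
  set S : Set ℝ := {t | x₀ t = c} with hSdef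
  have hSclosed : IsClosed S := isClosed_eq hx₀cont continuous_const
  have hSopen : IsOpen S := by
    rw [isOpen_iff_mem_nhds]
    intro t₂ ht₂
    have hpre : x₀ ⁻¹' (closedBall c 1) ∈ 𝓝 t₂ := by
      refine (hx₀cont.continuousAt).preimage_mem_nhds ?_
      rw [show x₀ t₂ = c from ht₂]
      exact closedBall_mem_nhds c one_pos
    obtain ⟨δ, hδpos, hδ⟩ := Metric.mem_nhds_iff.mp hpre
    set δ' := δ / 2 with hδ'
    have hδ'pos : 0 < δ' := by positivity
    have hsub : Icc (t₂ - δ') (t₂ + δ') ⊆ x₀ ⁻¹' (closedBall c 1) := by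
      intro τ hτ
      apply hδ
      rw [Metric.mem_ball, Real.dist_eq, abs_sub_lt_iff]
      have h1 := hτ.1; have h2 := hτ.2
      simp only [hδ'] at h1 h2
      constructor <;> linarith
    have heq : EqOn x₀ (fun _ => c) (Icc (t₂ - δ') (t₂ + δ')) := by
      apply ODE_solution_unique_of_mem_Icc (v := fun _ y => ψ y)
        (s := fun _ => closedBall c 1) (fun _ _ => hL)
        (ht := ⟨by linarith, by linarith⟩)
        (hf := hx₀cont.continuousOn)
        (hf' := fun t ht => hx₀sol t)
        (hfs := fun t ht => hsub (Ioo_subset_Icc_self ht))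
        (hg := continuousOn_const)
        (hg' := fun t ht => by simpa [← hc, h0] using hasDerivAt_const t c)
        (hgs := fun t ht => mem_closedBall_self one_pos.le)
        (heq := ht₂)
    have : Ioo (t₂ - δ') (t₂ + δ') ⊆ S := fun τ hτ => heq (Ioo_subset_Icc_self hτ)
    exact Filter.mem_of_superset (Ioo_mem_nhds (by linarith) (by linarith)) this
  have : S = univ := by
    rcases isClopen_iff.mp ⟨hSclosed, hSopen⟩ with h | h
    · exfalso
      rw [eq_empty_iff_forall_notMem] at h
      exact h t₁ rfl
    · exact h
  have hconst : ∀ t, x₀ t = c := fun t => by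
    have := this ▸ (mem_univ t); exact this
  have hper : Function.Periodic x₀ (T₀ / 2) := fun t => by rw [hconst, hconst]
  have := hx₀least (T₀ / 2) (by linarith) hper
  linarith

end aux

set_option maxHeartbeats 4000000 in
/-- **Existence of the constant `γ₀` of Definition 1 (isolation of the limit
cycle).**  Let `x₀` be a periodic solution of the planar system `ẋ = ψ(x)` of
least period `T₀ > 0` with trajectory `x̃₀ = x₀ '' [0, T₀]`, and assume
condition (A₀): the linear system `ẏ = ψ'(x₀(t)) y` has no `2T₀`-periodic
solution linearly independent of `ẋ₀`.  Then there is `γ₀ > 0` such that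
`ẋ = ψ(x)` has no `T₀`-periodic solution `x` whose initial value `ξ = x 0`
satisfies `0 < dist(ξ, x̃₀) < γ₀`. -/
theorem limit_cycle_isolated
    (ψ : EuclideanSpace ℝ (Fin 2) → EuclideanSpace ℝ (Fin 2))
    (hψ : ContDiff ℝ 2 ψ)
    (T₀ : ℝ) (hT₀ : 0 < T₀)
    (x₀ : ℝ → EuclideanSpace ℝ (Fin 2))
    (hx₀sol : ∀ t : ℝ, HasDerivAt x₀ (ψ (x₀ t)) t)
    (hx₀per : Function.Periodic x₀ T₀)
    (hx₀least : ∀ p : ℝ, 0 < p → Function.Periodic x₀ p → T₀ ≤ p)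
    (hA₀ : ∀ y : ℝ → EuclideanSpace ℝ (Fin 2),
      (∀ t : ℝ, HasDerivAt y (fderiv ℝ ψ (x₀ t) (y t)) t) →
      Function.Periodic y (2 * T₀) →
      ¬ LinearIndependent ℝ ![y, fun t => ψ (x₀ t)]) :
    ∃ γ₀ > (0 : ℝ), ∀ x : ℝ → EuclideanSpace ℝ (Fin 2),
      (∀ t : ℝ, HasDerivAt x (ψ (x t)) t) →
      Function.Periodic x T₀ →
      ¬ (0 < Metric.infDist (x 0) (x₀ '' Set.Icc 0 T₀) ∧
          Metric.infDist (x 0) (x₀ '' Set.Icc 0 T₀) < γ₀) := by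
  classical
  have hx₀cont : Continuous x₀ :=
    continuous_iff_continuousAt.mpr fun t => (hx₀sol t).continuousAt
  have hψc : Continuous ψ := hψ.continuous
  have hψ1 : ContDiff ℝ 1 ψ := hψ.of_le (by norm_num)
  have hψd : Differentiable ℝ ψ := hψ1.differentiable one_ne_zero
  have hfc : Continuous (fderiv ℝ ψ) := hψ.continuous_fderiv (by norm_num)
  have hne : ∀ t, ψ (x₀ t) ≠ 0 := psi_ne_zero_on_cycle hψ1 hT₀ hx₀sol hx₀least
  set K : Set (EuclideanSpace ℝ (Fin 2)) := x₀ '' Set.Icc 0 T₀ with hKdef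
  have hKcp : IsCompact K := isCompact_Icc.image hx₀cont
  have hKne : K.Nonempty := ⟨x₀ 0, ⟨0, ⟨le_refl 0, hT₀.le⟩, rfl⟩⟩
  have hmemK : ∀ t, x₀ t ∈ K := by
    intro t
    obtain ⟨s, hs, he⟩ := hx₀per.exists_mem_Ico₀ hT₀ t
    exact ⟨s, Ico_subset_Icc_self hs, he.symm⟩
  obtain ⟨R0, hR0⟩ := hKcp.isBounded.subset_closedBall 0
  set R := max R0 0 with hRdef
  have hKR : ∀ p ∈ K, ‖p‖ ≤ R := fun p hp =>
    le_trans (by simpa [dist_zero_right] using hR0 hp) (le_max_left _ _)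
  set B : Set (EuclideanSpace ℝ (Fin 2)) := Metric.closedBall 0 (R + 2) with hBdef
  have hBcp : IsCompact B := isCompact_closedBall _ _
  have hBconv : Convex ℝ B := convex_closedBall _ _
  have hKB : K ⊆ B := fun p hp => by
    simp only [hBdef, Metric.mem_closedBall, dist_zero_right]
    linarith [hKR p hp]
  have hnearB : ∀ p q, q ∈ K → dist p q ≤ 1 → p ∈ B := by
    intro p q hq hd
    simp only [hBdef, Metric.mem_closedBall, dist_zero_right]
    have h1 : ‖p‖ - ‖q‖ ≤ ‖p - q‖ := norm_sub_norm_le p q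
    rw [dist_eq_norm] at hd
    linarith [hKR q hq]
  obtain ⟨L, hL⟩ := lipschitzOnWith_of_contDiff_one hψ1 hBcp hBconv
  obtain ⟨L₂, hL₂⟩ := lipschitzOnWith_of_contDiff_one
    (hψ.fderiv_right (by norm_num)) hBcp hBconv
  obtain ⟨Mb0, hMb0⟩ := hKcp.exists_bound_of_continuousOn hfc.continuousOn
  set Mb := max Mb0 0 with hMbdef
  have hMbnn : 0 ≤ Mb := le_max_right _ _
  have hMb : ∀ p ∈ K, ‖fderiv ℝ ψ p‖ ≤ Mb := fun p hp =>
    le_trans (hMb0 p hp) (le_max_left _ _)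
  obtain ⟨M₀0, hM₀0⟩ := hKcp.exists_bound_of_continuousOn hψc.continuousOn
  set M₀ := max M₀0 0 with hM₀def
  have hM₀nn : 0 ≤ M₀ := le_max_right _ _
  have hM₀ : ∀ p ∈ K, ‖ψ p‖ ≤ M₀ := fun p hp => le_trans (hM₀0 p hp) (le_max_left _ _)
  have hx₀lip : LipschitzWith M₀.toNNReal x₀ := by
    apply lipschitzWith_of_nnnorm_deriv_le (fun t => (hx₀sol t).differentiableAt)
    intro t
    rw [(hx₀sol t).deriv]
    have h1 : ‖ψ (x₀ t)‖₊ = ‖ψ (x₀ t)‖.toNNReal := by simp [Real.toNNReal, nnnorm]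
    rw [h1]
    exact Real.toNNReal_mono (hM₀ _ (hmemK t))
  set C := Real.exp (L * T₀) with hCdef
  have hC1 : 1 ≤ C := Real.one_le_exp (by positivity)
  have hCpos : 0 < C := lt_of_lt_of_le one_pos hC1
  by_contra hcon
  push_neg at hcon
  -- a sequence of periodic solutions approaching the cycle
  have hseq : ∀ n : ℕ, ∃ x : ℝ → EuclideanSpace ℝ (Fin 2),
      (∀ t, HasDerivAt x (ψ (x t)) t) ∧ Function.Periodic x T₀ ∧
      0 < Metric.infDist (x 0) K ∧ Metric.infDist (x 0) K < 1 / ((n + 1) * (2 * C)) := by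
    intro n
    obtain ⟨x, h1, h2, h3, h4⟩ := hcon (1 / ((n + 1) * (2 * C))) (by positivity)
    exact ⟨x, h1, h2, h3, h4⟩
  choose X hXsol hXper hXpos hXlt using hseq
  have hXcont : ∀ n, Continuous (X n) :=
    fun n => continuous_iff_continuousAt.mpr fun t => (hXsol n t).continuousAt
  -- nearest point and first-order (orthogonality) condition
  have hnp : ∀ n, ∃ s ∈ Set.Icc (0:ℝ) T₀, dist (X n 0) (x₀ s) = Metric.infDist (X n 0) K ∧
      (inner ℝ (X n 0 - x₀ s) (ψ (x₀ s)) : ℝ) = 0 := by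
    intro n
    obtain ⟨p, hpK, hpd⟩ := hKcp.exists_infDist_eq_dist hKne (X n 0)
    obtain ⟨s, hsI, hsp⟩ := hpK
    refine ⟨s, hsI, by rw [hsp, hpd], ?_⟩
    have hmin : ∀ t : ℝ, dist (X n 0) (x₀ s) ≤ dist (X n 0) (x₀ t) := by
      intro t
      rw [hsp, ← hpd]
      exact Metric.infDist_le_dist_of_mem (hmemK t)
    set ξ := X n 0 with hξdef
    have hd : ∀ t : ℝ, HasDerivAt (fun t => ξ - x₀ t) (-(ψ (x₀ t))) t :=
      fun t => (hx₀sol t).const_sub ξ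
    have hg : ∀ t : ℝ, HasDerivAt (fun t => (inner ℝ (ξ - x₀ t) (ξ - x₀ t) : ℝ))
        (2 * inner ℝ (ξ - x₀ t) (-(ψ (x₀ t)))) t := by
      intro t
      have := (hd t).inner ℝ (hd t)
      refine this.congr_deriv ?_
      rw [real_inner_comm]
      ring
    have hlmin : IsLocalMin (fun t => (inner ℝ (ξ - x₀ t) (ξ - x₀ t) : ℝ)) s := by
      apply IsMinOn.isLocalMin _ (Filter.univ_mem)
      intro t _
      simp only [real_inner_self_eq_norm_sq]
      have h1 : ‖ξ - x₀ s‖ ≤ ‖ξ - x₀ t‖ := by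
        rw [← dist_eq_norm, ← dist_eq_norm]; exact hmin t
      exact pow_le_pow_left₀ (norm_nonneg _) h1 2
    have h0 := hlmin.hasDerivAt_eq_zero (hg s)
    rw [inner_neg_right] at h0
    linarith [h0]
  choose sn hsnI hsnd hsno using hnp
  set εf : ℕ → ℝ := fun n => Metric.infDist (X n 0) K with hεdef
  have hεpos : ∀ n, 0 < εf n := hXpos
  have hεC : ∀ n, εf n * C < 1 / (2 * (n + 1)) := by
    intro n
    have h := hXlt n
    have h2 : εf n * C < (1 / ((n + 1) * (2 * C))) * C :=
      mul_lt_mul_of_pos_right h hCpos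
    calc εf n * C < (1 / ((n + 1) * (2 * C))) * C := h2
      _ = 1 / (2 * (n + 1)) := by field_simp
  have hεC1 : ∀ n, εf n * C < 1 := by
    intro n
    refine lt_of_lt_of_le (hεC n) ?_
    rw [div_le_one (by positivity)]
    have : (0:ℝ) ≤ n := Nat.cast_nonneg n
    linarith
  -- a priori bound via Grönwall with bootstrap
  have hAP : ∀ n, ∀ t ∈ Set.Icc (0:ℝ) T₀, dist (X n t) (x₀ (t + sn n)) ≤ εf n * C := by
    intro n
    set g : ℝ → EuclideanSpace ℝ (Fin 2) := fun t => x₀ (t + sn n) with hgdef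
    have hgsol : ∀ t, HasDerivAt g (ψ (g t)) t := by
      intro t
      have h1 : HasDerivAt (fun u : ℝ => u + sn n) 1 t := (hasDerivAt_id t).add_const _
      have := (hx₀sol (t + sn n)).scomp t h1
      simp only [one_smul] at this
      exact this
    have hgcont : Continuous g := hx₀cont.comp (continuous_id.add continuous_const)
    have hgK : ∀ t, g t ∈ K := fun t => hmemK _
    have hd0 : dist (X n 0) (g 0) = εf n := by
      simp only [hgdef, zero_add]
      exact hsnd n
    have key : ∀ t ∈ Set.Icc (0:ℝ) T₀, dist (X n t) (g t) ≤ 1 := by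
      by_contra hk
      push_neg at hk
      obtain ⟨t₁, ht₁I, ht₁⟩ := hk
      set S := {t ∈ Set.Icc (0:ℝ) T₀ | 1 ≤ dist (X n t) (g t)} with hSdef
      have hFcont : Continuous fun t => dist (X n t) (g t) := (hXcont n).dist hgcont
      have hSeq : S = Set.Icc (0:ℝ) T₀ ∩ (fun t => dist (X n t) (g t)) ⁻¹' Set.Ici 1 := by
        ext τ; simp [hSdef, Set.mem_sep_iff, and_comm]
      have hScp : IsCompact S := by
        rw [hSeq]
        exact isCompact_Icc.inter_right (isClosed_Ici.preimage hFcont)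
      have hSne : S.Nonempty := ⟨t₁, ht₁I, ht₁.le⟩
      set t₂ := sInf S with ht₂def
      have ht₂S : t₂ ∈ S := hScp.sInf_mem hSne
      have ht₂I : t₂ ∈ Set.Icc (0:ℝ) T₀ := ht₂S.1
      have hlt : ∀ τ ∈ Set.Ico (0:ℝ) t₂, dist (X n τ) (g τ) < 1 := by
        intro τ hτ
        by_contra hge
        push_neg at hge
        have hτS : τ ∈ S := ⟨⟨hτ.1, le_trans hτ.2.le ht₂I.2⟩, hge⟩
        exact absurd (csInf_le hScp.isBounded.bddBelow hτS) (not_le.mpr hτ.2)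
      have hmem : ∀ τ ∈ Set.Ico (0:ℝ) t₂, X n τ ∈ B := fun τ hτ =>
        hnearB _ _ (hgK τ) (hlt τ hτ).le
      have hgr := dist_le_of_trajectories_ODE_of_mem (v := fun _ y => ψ y)
        (s := fun _ => B) (a := 0) (b := t₂) (fun _ _ => hL)
        ((hXcont n).continuousOn)
        (fun τ _ => (hXsol n τ).hasDerivWithinAt)
        hmem
        hgcont.continuousOn
        (fun τ _ => (hgsol τ).hasDerivWithinAt)
        (fun τ _ => hKB (hgK τ))
        (le_of_eq hd0)
        t₂ ⟨ht₂I.1, le_refl t₂⟩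
      have hfin : dist (X n t₂) (g t₂) ≤ εf n * C := by
        refine le_trans hgr ?_
        apply mul_le_mul_of_nonneg_left _ (hεpos n).le
        rw [hCdef, sub_zero]
        apply Real.exp_le_exp.mpr
        have hL0 : (0:ℝ) ≤ (L:ℝ) := L.coe_nonneg
        nlinarith [ht₂I.1, ht₂I.2]
      linarith [ht₂S.2, hεC1 n]
    intro t htI
    have hmem : ∀ τ ∈ Set.Ico (0:ℝ) t, X n τ ∈ B := fun τ hτ =>
      hnearB _ _ (hgK τ) (key τ ⟨hτ.1, le_trans hτ.2.le htI.2⟩)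
    have hgr := dist_le_of_trajectories_ODE_of_mem (v := fun _ y => ψ y)
      (s := fun _ => B) (a := 0) (b := t) (fun _ _ => hL)
      ((hXcont n).continuousOn)
      (fun τ _ => (hXsol n τ).hasDerivWithinAt)
      hmem
      hgcont.continuousOn
      (fun τ _ => (hgsol τ).hasDerivWithinAt)
      (fun τ _ => hKB (hgK τ))
      (le_of_eq hd0)
      t ⟨htI.1, le_refl t⟩
    refine le_trans hgr ?_
    apply mul_le_mul_of_nonneg_left _ (hεpos n).le
    rw [hCdef, sub_zero]
    apply Real.exp_le_exp.mpr
    have hL0 : (0:ℝ) ≤ (L:ℝ) := L.coe_nonneg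
    nlinarith [htI.1, htI.2]
  -- extension of the a priori bound to all times, by periodicity
  have hAPall : ∀ n, ∀ t : ℝ, dist (X n t) (x₀ (t + sn n)) ≤ εf n * C := by
    intro n t
    have hper : Function.Periodic (fun t => dist (X n t) (x₀ (t + sn n))) T₀ := by
      intro u
      simp only
      rw [hXper n u, show u + T₀ + sn n = u + sn n + T₀ by ring, hx₀per (u + sn n)]
    obtain ⟨u, hu, he⟩ := hper.exists_mem_Ico₀ hT₀ t
    rw [he]
    exact hAP n u (Set.Ico_subset_Icc_self hu)
  have hXB : ∀ n t, X n t ∈ B := fun n t =>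
    hnearB _ _ (hmemK (t + sn n)) (le_trans (hAPall n t) (hεC1 n).le)
  -- the blow-up sequence
  set z : ℕ → ℝ → EuclideanSpace ℝ (Fin 2) :=
    fun n t => (εf n)⁻¹ • (X n t - x₀ (t + sn n)) with hzdef
  have hzper : ∀ n, Function.Periodic (z n) T₀ := by
    intro n u
    simp only [hzdef]
    rw [hXper n u, show u + T₀ + sn n = u + sn n + T₀ by ring, hx₀per (u + sn n)]
  have hznorm : ∀ n t, ‖z n t‖ ≤ C := by
    intro n t
    have h1 : ‖X n t - x₀ (t + sn n)‖ ≤ εf n * C := by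
      rw [← dist_eq_norm]; exact hAPall n t
    simp only [hzdef]
    rw [norm_smul, norm_inv, Real.norm_eq_abs, abs_of_pos (hεpos n),
      inv_mul_le_iff₀ (hεpos n)]
    nlinarith [hεpos n]
  have hz0 : ∀ n, ‖z n 0‖ = 1 := by
    intro n
    have h1 : ‖X n 0 - x₀ (0 + sn n)‖ = εf n := by
      rw [← dist_eq_norm, zero_add]; exact hsnd n
    simp only [hzdef]
    rw [norm_smul, norm_inv, Real.norm_eq_abs, abs_of_pos (hεpos n), h1,
      inv_mul_cancel₀ (hεpos n).ne']
  have hzderiv : ∀ n t, HasDerivAt (z n)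
      ((εf n)⁻¹ • (ψ (X n t) - ψ (x₀ (t + sn n)))) t := by
    intro n t
    refine HasDerivAt.const_smul (f := fun u => X n u - x₀ (u + sn n)) (εf n)⁻¹ ?_
    have h1 : HasDerivAt (fun u : ℝ => u + sn n) 1 t := (hasDerivAt_id t).add_const _
    have h2 : HasDerivAt (fun u => x₀ (u + sn n)) (ψ (x₀ (t + sn n))) t := by
      have h := (hx₀sol (t + sn n)).scomp t h1
      simp only [one_smul] at h
      exact h
    exact (hXsol n t).sub h2
  have hzcont : ∀ n, Continuous (z n) := fun n =>
    continuous_iff_continuousAt.mpr fun t => (hzderiv n t).continuousAt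
  -- subsequence converging in [0,T₀] × closedBall
  have hmemprod : ∀ n, (sn n, z n 0) ∈
      (Set.Icc (0:ℝ) T₀) ×ˢ Metric.closedBall (0 : EuclideanSpace ℝ (Fin 2)) C := fun n =>
    ⟨hsnI n, by rw [Metric.mem_closedBall, dist_zero_right]; exact hznorm n 0⟩
  obtain ⟨⟨sstar, v⟩, hlim_mem, φ, hφmono, hφlim⟩ :=
    (isCompact_Icc.prod (isCompact_closedBall _ _)).tendsto_subseq hmemprod
  have hslim : Filter.Tendsto (fun k => sn (φ k)) Filter.atTop (𝓝 sstar) :=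
    (continuous_fst.tendsto _).comp hφlim
  have hvlim : Filter.Tendsto (fun k => z (φ k) 0) Filter.atTop (𝓝 v) :=
    (continuous_snd.tendsto _).comp hφlim
  have hsstar : sstar ∈ Set.Icc (0:ℝ) T₀ := hlim_mem.1
  have hvnorm : ‖v‖ = 1 := by
    have h0 : Filter.Tendsto (fun k => ‖z (φ k) 0‖) Filter.atTop (𝓝 ‖v‖) :=
      (continuous_norm.tendsto v).comp hvlim
    have h1 : Filter.Tendsto (fun k => ‖z (φ k) 0‖) Filter.atTop (𝓝 1) := by
      have : (fun k => ‖z (φ k) 0‖) = fun _ => (1:ℝ) := funext fun k => hz0 (φ k)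
      rw [this]; exact tendsto_const_nhds
    exact tendsto_nhds_unique h0 h1
  have hεlim : Filter.Tendsto (fun k => εf (φ k)) Filter.atTop (𝓝 0) := by
    apply squeeze_zero (fun k => (hεpos (φ k)).le)
      (g := fun k : ℕ => 1 / ((k:ℝ) + 1))
    · intro k
      have h1 := hXlt (φ k)
      have h2 : ((k:ℝ) + 1) ≤ ((φ k : ℝ) + 1) := by
        have h2a : k ≤ φ k := hφmono.le_apply
        have h2b : (k:ℝ) ≤ (φ k : ℝ) := Nat.cast_le.mpr h2a
        linarith
      have h3 : (1:ℝ) / (((φ k):ℝ) + 1) ≤ 1 / ((k:ℝ) + 1) := by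
        apply one_div_le_one_div_of_le (by positivity) h2
      refine le_trans ?_ h3
      have h4 : ((φ k:ℝ) + 1) * (2 * C) ≥ ((φ k:ℝ) + 1) * 1 := by
        apply mul_le_mul_of_nonneg_left (by linarith) (by positivity)
      have h5 : (1:ℝ) / (((φ k):ℝ) + 1) = 1 / (((φ k):ℝ) + 1) := rfl
      refine le_trans h1.le ?_
      apply one_div_le_one_div_of_le (by positivity)
      linarith
    · exact tendsto_one_div_add_atTop_nhds_zero_nat
  have horth : (inner ℝ v (ψ (x₀ sstar)) : ℝ) = 0 := by
    have hzo : ∀ k, (inner ℝ (z (φ k) 0) (ψ (x₀ (sn (φ k)))) : ℝ) = 0 := by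
      intro k
      simp only [hzdef, zero_add]
      rw [real_inner_smul_left, hsno (φ k), mul_zero]
    have h1 : Filter.Tendsto (fun k => (inner ℝ (z (φ k) 0) (ψ (x₀ (sn (φ k)))) : ℝ))
        Filter.atTop (𝓝 (inner ℝ v (ψ (x₀ sstar)))) :=
      hvlim.inner (((hψc.comp hx₀cont).tendsto sstar).comp hslim)
    have h2 : Filter.Tendsto (fun k => (inner ℝ (z (φ k) 0) (ψ (x₀ (sn (φ k)))) : ℝ))
        Filter.atTop (𝓝 0) := by
      have : (fun k => (inner ℝ (z (φ k) 0) (ψ (x₀ (sn (φ k)))) : ℝ)) = fun _ => (0:ℝ) :=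
        funext fun k => hzo k
      rw [this]; exact tendsto_const_nhds
    exact tendsto_nhds_unique h1 h2
  -- the limiting (shifted) variational linear field
  set Bs : ℝ → (EuclideanSpace ℝ (Fin 2)) →L[ℝ] EuclideanSpace ℝ (Fin 2) :=
    fun t => fderiv ℝ ψ (x₀ (t + sstar)) with hBsdef
  have hBscont : Continuous Bs :=
    hfc.comp (hx₀cont.comp (continuous_id.add continuous_const))
  have hBsnorm : ∀ t, ‖Bs t‖ ≤ Mb := fun t => hMb _ (hmemK _)
  have hBsper : ∀ t, Bs (t + T₀) = Bs t := by
    intro t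
    simp only [hBsdef]
    rw [show t + T₀ + sstar = t + sstar + T₀ by ring, hx₀per]
  set Kb : ℝ≥0 := Mb.toNNReal + 1 with hKbdef
  have hKbpos : (0:ℝ) < Kb := by positivity
  have hKblip : ∀ t : ℝ, LipschitzWith Kb fun y => Bs t y := by
    intro t
    refine LipschitzWith.weaken (Bs t).lipschitz ?_
    have h1 : ‖Bs t‖₊ = ‖Bs t‖.toNNReal := by simp [Real.toNNReal, nnnorm]
    rw [h1, hKbdef]
    exact le_trans (Real.toNNReal_mono (hBsnorm t)) (self_le_add_right _ _)
  -- Taylor estimate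
  have hTaylor : ∀ a b : EuclideanSpace ℝ (Fin 2), a ∈ B → b ∈ B →
      ‖ψ b - ψ a - fderiv ℝ ψ a (b - a)‖ ≤ (L₂ * ‖b - a‖) * ‖b - a‖ := by
    intro a b ha hb
    set s' := Metric.closedBall a ‖b - a‖ ∩ B with hs'def
    have hconv : Convex ℝ s' := (convex_closedBall _ _).inter hBconv
    have has' : a ∈ s' := ⟨Metric.mem_closedBall_self (norm_nonneg _), ha⟩
    have hbs' : b ∈ s' := ⟨by rw [Metric.mem_closedBall, dist_eq_norm], hb⟩
    have hbound : ∀ y ∈ s', ‖fderiv ℝ ψ y - fderiv ℝ ψ a‖ ≤ L₂ * ‖b - a‖ := by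
      intro y hy
      have h2 := hL₂.dist_le_mul y hy.2 a ha
      rw [dist_eq_norm] at h2
      refine le_trans h2 ?_
      have h3 : dist y a ≤ ‖b - a‖ := hy.1
      have hL₂0 : (0:ℝ) ≤ L₂ := L₂.coe_nonneg
      exact mul_le_mul_of_nonneg_left h3 hL₂0
    exact hconv.norm_image_sub_le_of_norm_fderiv_le'
      (fun y _ => hψd.differentiableAt) hbound has' hbs'
  -- defect estimate for the blow-up sequence
  set η : ℕ → ℝ := fun k =>
    L₂ * C^2 * εf (φ k) + L₂ * (M₀ * |sn (φ k) - sstar|) * C with hηdef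
  have hηnn : ∀ k, 0 ≤ η k := by
    intro k
    have h1 : (0:ℝ) ≤ L₂ := L₂.coe_nonneg
    have := (hεpos (φ k)).le
    positivity
  have hηlim : Filter.Tendsto η Filter.atTop (𝓝 0) := by
    have h1 : Filter.Tendsto (fun k => |sn (φ k) - sstar|) Filter.atTop (𝓝 0) := by
      have h0 : Filter.Tendsto (fun k => sn (φ k) - sstar) Filter.atTop (𝓝 (sstar - sstar)) :=
        hslim.sub_const sstar
      rw [sub_self] at h0
      have h1 := h0.abs
      rwa [abs_zero] at h1
    have h2 := ((hεlim.const_mul (L₂ * C^2 : ℝ)).add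
      ((h1.const_mul (L₂ * M₀ : ℝ)).mul_const C))
    simp only [mul_zero, zero_mul, add_zero, zero_add] at h2
    refine h2.congr ?_
    intro k
    simp only [hηdef]
    ring
  have hdefect : ∀ k t,
      ‖(εf (φ k))⁻¹ • (ψ (X (φ k) t) - ψ (x₀ (t + sn (φ k)))) - Bs t (z (φ k) t)‖ ≤ η k := by
    intro k t
    have hL₂0 : (0:ℝ) ≤ L₂ := L₂.coe_nonneg
    set n := φ k with hndef
    set a := x₀ (t + sn n) with hadef
    set b := X n t with hbdef
    have haB : a ∈ B := hKB (hmemK _)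
    have hbB : b ∈ B := hXB n t
    have hab : ‖b - a‖ ≤ εf n * C := by
      rw [← dist_eq_norm]; exact hAPall n t
    have hz_eq : z n t = (εf n)⁻¹ • (b - a) := rfl
    have hsplit : (εf n)⁻¹ • (ψ b - ψ a) - Bs t (z n t)
        = (εf n)⁻¹ • (ψ b - ψ a - fderiv ℝ ψ a (b - a))
          + ((fderiv ℝ ψ a - Bs t) (z n t)) := by
      rw [hz_eq]
      simp only [ContinuousLinearMap.sub_apply, map_sub, map_add, map_smul, smul_sub]
      abel
    rw [hsplit]
    refine le_trans (norm_add_le _ _) ?_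
    have h1 : ‖(εf n)⁻¹ • (ψ b - ψ a - fderiv ℝ ψ a (b - a))‖ ≤ L₂ * C^2 * εf n := by
      rw [norm_smul, norm_inv, Real.norm_eq_abs, abs_of_pos (hεpos n),
        inv_mul_le_iff₀ (hεpos n)]
      have h2 := hTaylor a b haB hbB
      have hba0 : (0:ℝ) ≤ ‖b - a‖ := norm_nonneg _
      have h6 : ‖b - a‖ * ‖b - a‖ ≤ (εf n * C) * (εf n * C) :=
        mul_le_mul hab hab hba0 (mul_pos (hεpos n) hCpos).le
      nlinarith [h2, h6, hL₂0]
    have h2 : ‖(fderiv ℝ ψ a - Bs t) (z n t)‖ ≤ L₂ * (M₀ * |sn n - sstar|) * C := by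
      refine le_trans ((fderiv ℝ ψ a - Bs t).le_opNorm _) ?_
      have hop : ‖fderiv ℝ ψ a - Bs t‖ ≤ L₂ * (M₀ * |sn n - sstar|) := by
        have h3 := hL₂.dist_le_mul a haB (x₀ (t + sstar)) (hKB (hmemK _))
        rw [dist_eq_norm] at h3
        refine le_trans h3 ?_
        have h4 : dist a (x₀ (t + sstar)) ≤ M₀ * |sn n - sstar| := by
          have h5 := hx₀lip.dist_le_mul (t + sn n) (t + sstar)
          rw [Real.coe_toNNReal M₀ hM₀nn] at h5
          refine le_trans h5 ?_
          rw [Real.dist_eq, show t + sn n - (t + sstar) = sn n - sstar by ring]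
        exact mul_le_mul_of_nonneg_left h4 hL₂0
      have hznt := hznorm n t
      have hopnn : (0:ℝ) ≤ ‖fderiv ℝ ψ a - Bs t‖ := norm_nonneg _
      nlinarith [norm_nonneg (z n t)]
    have : η k = L₂ * C^2 * εf n + L₂ * (M₀ * |sn n - sstar|) * C := rfl
    rw [this]
    exact add_le_add h1 h2
  -- the relabelled subsequence
  set Z : ℕ → ℝ → EuclideanSpace ℝ (Fin 2) := fun k => z (φ k) with hZdef
  set D : ℕ → ℝ → EuclideanSpace ℝ (Fin 2) :=
    fun k t => (εf (φ k))⁻¹ • (ψ (X (φ k) t) - ψ (x₀ (t + sn (φ k)))) with hDdef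
  have hZderiv : ∀ k t, HasDerivAt (Z k) (D k t) t := fun k t => hzderiv (φ k) t
  have hZcont : ∀ k, Continuous (Z k) := fun k => hzcont (φ k)
  have hZdefect : ∀ k t, dist (D k t) (Bs t (Z k t)) ≤ η k := by
    intro k t
    rw [dist_eq_norm]
    exact hdefect k t
  -- constants for the linear Grönwall estimate
  set C₂ := Real.exp (Kb * T₀) with hC₂def
  have hC₂1 : 1 ≤ C₂ := Real.one_le_exp (by positivity)
  have hC₂pos : 0 < C₂ := lt_of_lt_of_le one_pos hC₂1
  have hKb1 : (1:ℝ) ≤ (Kb:ℝ) := by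
    have h0 : (0:ℝ) ≤ (Mb.toNNReal : ℝ) := (Mb.toNNReal).coe_nonneg
    rw [hKbdef]
    push_cast
    linarith
  have hgb : ∀ δ ε' : ℝ, 0 ≤ δ → 0 ≤ ε' → ∀ x ∈ Set.Icc (0:ℝ) T₀,
      gronwallBound δ Kb ε' (x - 0) ≤ (δ + ε') * C₂ := by
    intro δ ε' hδ hε' x hx
    rw [sub_zero, gronwallBound_of_K_ne_0 (by positivity)]
    have h1 : Real.exp (Kb * x) ≤ C₂ := by
      rw [hC₂def]
      exact Real.exp_le_exp.mpr (mul_le_mul_of_nonneg_left hx.2 (by positivity))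
    have h2 : ε' / Kb ≤ ε' := div_le_self hε' hKb1
    have h3 : (0:ℝ) < Real.exp ((Kb:ℝ) * x) := Real.exp_pos _
    have h4 : (1:ℝ) ≤ Real.exp ((Kb:ℝ) * x) := Real.one_le_exp (mul_nonneg (by positivity) hx.1)
    nlinarith [mul_le_mul_of_nonneg_right h2 (by linarith : (0:ℝ) ≤ Real.exp ((Kb:ℝ) * x) - 1),
      mul_le_mul_of_nonneg_left h1 hδ, mul_le_mul_of_nonneg_left h1 hε',
      div_nonneg hε' (by positivity : (0:ℝ) ≤ (Kb:ℝ))]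
  -- mutual Grönwall bound on a period
  have hmut : ∀ j k, ∀ t ∈ Set.Icc (0:ℝ) T₀,
      dist (Z j t) (Z k t) ≤ (dist (Z j 0) (Z k 0) + (η j + η k)) * C₂ := by
    intro j k t ht
    have h0 := dist_le_of_approx_trajectories_ODE (v := fun t y => Bs t y)
      (a := 0) (b := T₀) hKblip
      (hZcont j).continuousOn
      (fun τ _ => (hZderiv j τ).hasDerivWithinAt)
      (fun τ _ => hZdefect j τ)
      (hZcont k).continuousOn
      (fun τ _ => (hZderiv k τ).hasDerivWithinAt)
      (fun τ _ => hZdefect k τ)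
      (le_refl (dist (Z j 0) (Z k 0)))
      t ht
    exact le_trans h0 (hgb _ _ dist_nonneg (by linarith [hηnn j, hηnn k]) t ht)
  -- extend to all times by periodicity
  have hmutR : ∀ j k (t : ℝ),
      dist (Z j t) (Z k t) ≤ (dist (Z j 0) (Z k 0) + (η j + η k)) * C₂ := by
    intro j k t
    have hper : Function.Periodic (fun t => dist (Z j t) (Z k t)) T₀ := by
      intro u
      simp only
      rw [hZdef]
      simp only
      rw [hzper (φ j) u, hzper (φ k) u]
    obtain ⟨u, hu, he⟩ := hper.exists_mem_Ico₀ hT₀ t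
    rw [he]
    exact hmut j k u (Set.Ico_subset_Icc_self hu)
  -- the sequence is pointwise Cauchy
  have hZ0cauchy : CauchySeq (fun k => Z k 0) := hvlim.cauchySeq
  have hcau : ∀ t : ℝ, CauchySeq (fun k => Z k t) := by
    intro t
    rw [Metric.cauchySeq_iff]
    intro ε hε
    obtain ⟨N₁, hN₁⟩ := Metric.cauchySeq_iff.mp hZ0cauchy (ε / (4 * C₂)) (by positivity)
    obtain ⟨N₂, hN₂⟩ := (Metric.tendsto_atTop.mp hηlim) (ε / (4 * C₂)) (by positivity)
    refine ⟨max N₁ N₂, fun j hj k hk => ?_⟩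
    have h1 := hN₁ j (le_trans (le_max_left _ _) hj) k (le_trans (le_max_left _ _) hk)
    have h2 := hN₂ j (le_trans (le_max_right _ _) hj)
    have h3 := hN₂ k (le_trans (le_max_right _ _) hk)
    rw [Real.dist_eq, sub_zero, abs_of_nonneg (hηnn j)] at h2
    rw [Real.dist_eq, sub_zero, abs_of_nonneg (hηnn k)] at h3
    have h4 := hmutR j k t
    have h5 : (dist (Z j 0) (Z k 0) + (η j + η k)) * C₂ < (ε / (4 * C₂) * 3) * C₂ := by
      apply mul_lt_mul_of_pos_right _ hC₂pos
      linarith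
    have h6 : (ε / (4 * C₂) * 3) * C₂ < ε := by
      have h7 : (ε / (4 * C₂) * 3) * C₂ = 3 / 4 * ε := by
        field_simp
      rw [h7]
      linarith
    exact lt_of_le_of_lt h4 (lt_trans h5 h6)
  -- the limit function
  have hylim : ∀ t : ℝ, ∃ l, Filter.Tendsto (fun k => Z k t) Filter.atTop (𝓝 l) :=
    fun t => cauchySeq_tendsto_of_complete (hcau t)
  choose y hy using hylim
  have hy0v : y 0 = v := tendsto_nhds_unique (hy 0) hvlim
  have hyper : Function.Periodic y T₀ := by
    intro t
    have h1 : (fun k => Z k (t + T₀)) = fun k => Z k t := by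
      funext k
      exact hzper (φ k) t
    have h2 := hy (t + T₀)
    rw [h1] at h2
    exact tendsto_nhds_unique h2 (hy t)
  -- quantitative convergence rate, uniform in t
  set ρ : ℕ → ℝ := fun k => (dist (Z k 0) (y 0) + η k) * C₂ with hρdef
  have hρnn : ∀ k, 0 ≤ ρ k := fun k =>
    mul_nonneg (add_nonneg dist_nonneg (hηnn k)) hC₂pos.le
  have hρlim : Filter.Tendsto ρ Filter.atTop (𝓝 0) := by
    have h1 : Filter.Tendsto (fun k => dist (Z k 0) (y 0)) Filter.atTop (𝓝 0) := by
      have := (hy 0).dist (tendsto_const_nhds (x := y 0))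
      simpa using this
    have h2 := (h1.add hηlim).mul_const C₂
    simpa using h2
  have hrate : ∀ k t, dist (Z k t) (y t) ≤ ρ k := by
    intro k t
    have h1 : Filter.Tendsto (fun j => dist (Z k t) (Z j t)) Filter.atTop
        (𝓝 (dist (Z k t) (y t))) := (tendsto_const_nhds (x := Z k t)).dist (hy t)
    have h2 : Filter.Tendsto (fun j => (dist (Z k 0) (Z j 0) + (η k + η j)) * C₂)
        Filter.atTop (𝓝 ((dist (Z k 0) (y 0) + (η k + 0)) * C₂)) :=
      (((tendsto_const_nhds (x := Z k 0)).dist (hy 0)).add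
        ((tendsto_const_nhds (x := η k)).add hηlim)).mul_const C₂
    have h3 := le_of_tendsto_of_tendsto' h1 h2 (fun j => hmutR k j t)
    simpa [hρdef] using h3
  -- continuity of the limit
  have hycont : Continuous y := by
    have hTU : TendstoUniformly (fun k t => Z k t) y Filter.atTop := by
      rw [Metric.tendstoUniformly_iff]
      intro ε hε
      have hev : ∀ᶠ k in Filter.atTop, ρ k < ε := hρlim.eventually_lt_const hε
      filter_upwards [hev] with k hk t
      calc dist (y t) (Z k t) = dist (Z k t) (y t) := dist_comm _ _
        _ ≤ ρ k := hrate k t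
        _ < ε := hk
    exact hTU.continuous (Filter.Eventually.of_forall fun k => hZcont k).frequently
  set gI : ℝ → EuclideanSpace ℝ (Fin 2) := fun τ => Bs τ (y τ) with hgIdef
  have hgIcont : Continuous gI := hBscont.clm_apply hycont
  have hDcont : ∀ k, Continuous (D k) := by
    intro k
    refine Continuous.const_smul (g := fun u => ψ (X (φ k) u) - ψ (x₀ (u + sn (φ k)))) ?_ (εf (φ k))⁻¹
    exact (hψc.comp (hXcont (φ k))).sub
      (hψc.comp (hx₀cont.comp (continuous_id.add continuous_const)))
  have hFTC : ∀ k t, Z k t = Z k 0 + ∫ τ in (0:ℝ)..t, D k τ := by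
    intro k t
    have h1 : ∫ τ in (0:ℝ)..t, D k τ = Z k t - Z k 0 :=
      intervalIntegral.integral_eq_sub_of_hasDerivAt (fun τ _ => hZderiv k τ)
        ((hDcont k).intervalIntegrable 0 t)
    rw [h1]
    abel
  have hKb0 : (0:ℝ) ≤ (Kb:ℝ) := Kb.coe_nonneg
  have hinteq : ∀ t, y t = y 0 + ∫ τ in (0:ℝ)..t, gI τ := by
    intro t
    have hptbd : ∀ k τ, ‖D k τ - gI τ‖ ≤ η k + Kb * ρ k := by
      intro k τ
      have h1 : ‖D k τ - Bs τ (Z k τ)‖ ≤ η k := hdefect k τ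
      have h2 : ‖Bs τ (Z k τ) - gI τ‖ ≤ Kb * ρ k := by
        have h3 := (hKblip τ).dist_le_mul (Z k τ) (y τ)
        rw [dist_eq_norm] at h3
        refine le_trans h3 ?_
        refine mul_le_mul_of_nonneg_left ?_ hKb0
        exact hrate k τ
      have h8 : D k τ - gI τ = (D k τ - Bs τ (Z k τ)) + (Bs τ (Z k τ) - gI τ) := by abel
      calc ‖D k τ - gI τ‖ = ‖(D k τ - Bs τ (Z k τ)) + (Bs τ (Z k τ) - gI τ)‖ := by rw [h8]
        _ ≤ ‖D k τ - Bs τ (Z k τ)‖ + ‖Bs τ (Z k τ) - gI τ‖ := norm_add_le _ _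
        _ ≤ η k + Kb * ρ k := add_le_add h1 h2
    have hIlim : Filter.Tendsto (fun k => ∫ τ in (0:ℝ)..t, D k τ) Filter.atTop
        (𝓝 (∫ τ in (0:ℝ)..t, gI τ)) := by
      rw [tendsto_iff_dist_tendsto_zero]
      apply squeeze_zero (fun k => dist_nonneg)
        (g := fun k : ℕ => (η k + (Kb:ℝ) * ρ k) * |t|)
      · intro k
        rw [dist_eq_norm, ← intervalIntegral.integral_sub ((hDcont k).intervalIntegrable 0 t)
          (hgIcont.intervalIntegrable 0 t)]
        have h9 := intervalIntegral.norm_integral_le_of_norm_le_const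
          (C := η k + (Kb:ℝ) * ρ k) (f := fun τ => D k τ - gI τ) (a := 0) (b := t)
          (fun τ _ => hptbd k τ)
        simpa [sub_zero] using h9
      · have h0 : Filter.Tendsto (fun k => η k + (Kb:ℝ) * ρ k) Filter.atTop (𝓝 0) := by
          have h0a := hηlim.add (hρlim.const_mul (Kb:ℝ))
          simpa using h0a
        simpa using h0.mul_const |t|
    have h2 : Filter.Tendsto (fun k => Z k 0 + ∫ τ in (0:ℝ)..t, D k τ) Filter.atTop
        (𝓝 (y 0 + ∫ τ in (0:ℝ)..t, gI τ)) := (hy 0).add hIlim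
    have h3 : (fun k => Z k t) = fun k => Z k 0 + ∫ τ in (0:ℝ)..t, D k τ :=
      funext fun k => hFTC k t
    have h4 := hy t
    rw [h3] at h4
    exact tendsto_nhds_unique h4 h2
  have hyderiv : ∀ t, HasDerivAt y (Bs t (y t)) t := by
    intro t
    have h1 : HasDerivAt (fun u => (y 0) + ∫ τ in (0:ℝ)..u, gI τ) (gI t) t :=
      ((hgIcont.integral_hasStrictDerivAt 0 t).hasDerivAt).const_add (y 0)
    exact h1.congr_of_eventuallyEq (Filter.Eventually.of_forall fun u => hinteq u)
  -- the periodic solution of the variational equation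
  set w : ℝ → EuclideanSpace ℝ (Fin 2) := fun t => y (t - sstar) with hwdef
  have hwderiv : ∀ t, HasDerivAt w (fderiv ℝ ψ (x₀ t) (w t)) t := by
    intro t
    have h1 : HasDerivAt (fun u : ℝ => u - sstar) 1 t := (hasDerivAt_id t).sub_const _
    have h2 := (hyderiv (t - sstar)).scomp t h1
    simp only [one_smul] at h2
    have h3 : Bs (t - sstar) (y (t - sstar)) = fderiv ℝ ψ (x₀ t) (w t) := by
      simp only [hBsdef, hwdef]
      rw [show t - sstar + sstar = t by ring]
    rw [h3] at h2
    exact h2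
  have hwper : Function.Periodic w (2 * T₀) := by
    intro u
    simp only [hwdef]
    rw [show u + 2 * T₀ - sstar = (u - sstar) + T₀ + T₀ by ring, hyper, hyper]
  have hLI : LinearIndependent ℝ ![w, fun t => ψ (x₀ t)] := by
    rw [linearIndependent_fin2]
    constructor
    · simp only [Matrix.cons_val_one, Matrix.head_cons]
      intro hzero
      exact hne sstar (congrFun hzero sstar)
    · intro a
      simp only [Matrix.cons_val_one, Matrix.head_cons, Matrix.cons_val_zero]
      intro heq2
      have h5 := congrFun heq2 sstar
      simp only [Pi.smul_apply] at h5
      have h6 : w sstar = v := by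
        simp only [hwdef, sub_self]
        exact hy0v
      rw [h6] at h5
      have h7 : (inner ℝ v v : ℝ) = 0 := by
        have h7a : (inner ℝ v v : ℝ) = inner ℝ (a • ψ (x₀ sstar)) v := by rw [h5]
        rw [h7a, real_inner_smul_left, real_inner_comm, horth, mul_zero]
      rw [real_inner_self_eq_norm_mul_norm, hvnorm] at h7
      norm_num at h7
  exact hA₀ w hwderiv hwper hLI
end

section
/- Let g : ℝ → ℝ² be continuous, and suppose g is periodic with period a > 0 and also periodic with period b > 0, where a/b is an irrational number. Then g is constant. (key step in the proof of Theorem 4) -/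
/-- **Key step in the proof of Theorem 4.**  If `g : ℝ → ℝ²` is continuous and
periodic with two periods `a > 0` and `b > 0` whose ratio `a / b` is irrational,
then `g` is constant. -/
theorem continuous_two_incommensurable_periods_constant
    (g : ℝ → EuclideanSpace ℝ (Fin 2)) (hg : Continuous g)
    (a b : ℝ) (ha : 0 < a) (hb : 0 < b)
    (hga : Function.Periodic g a) (hgb : Function.Periodic g b)
    (hirr : Irrational (a / b)) :
    ∃ c, ∀ t : ℝ, g t = c := by
  set S : AddSubgroup ℝ := AddSubgroup.closure {a, b} with hS
  -- every element of S is a period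
  have hper : ∀ p ∈ S, ∀ t, g (t + p) = g t := by
    intro p hp
    induction hp using AddSubgroup.closure_induction with
    | mem x hx =>
      rcases hx with rfl | rfl
      · exact fun t => hga t
      · exact fun t => hgb t
    | zero => simp
    | add x y _ _ hx hy => intro t; rw [← add_assoc, hy, hx]
    | neg x _ hx => intro t; have := hx (t + -x); simpa using this.symm
  -- S is dense
  have hdense : Dense (S : Set ℝ) := by
    rcases S.dense_or_cyclic with h | ⟨c, hc⟩
    · exact h
    · exfalso
      have haS : a ∈ S := AddSubgroup.subset_closure (by simp)
      have hbS : b ∈ S := AddSubgroup.subset_closure (by simp)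
      rw [hc] at haS hbS
      rcases AddSubgroup.mem_closure_singleton.mp haS with ⟨m, hm⟩
      rcases AddSubgroup.mem_closure_singleton.mp hbS with ⟨n, hn⟩
      have hc0 : c ≠ 0 := by
        rintro rfl; simp at hm; exact ha.ne' hm.symm
      have hn0 : (n : ℝ) ≠ 0 := by
        have : n ≠ 0 := by rintro rfl; simp at hn; exact hb.ne' hn.symm
        exact_mod_cast this
      have : (a / b : ℝ) = (m : ℝ) / (n : ℝ) := by
        rw [← hm, ← hn, zsmul_eq_mul, zsmul_eq_mul]
        field_simp
      exact hirr ⟨(m : ℚ) / (n : ℚ), by push_cast [this]; ring⟩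
  refine ⟨g 0, fun t => ?_⟩
  -- approximate -t by elements of S
  have hmem : (-t) ∈ closure (S : Set ℝ) := hdense.closure_eq ▸ Set.mem_univ _
  rcases mem_closure_iff_seq_limit.mp hmem with ⟨u, hu, hlim⟩
  have h1 : Filter.Tendsto (fun n => g (t + u n)) Filter.atTop (nhds (g 0)) := by
    have : Filter.Tendsto (fun n => t + u n) Filter.atTop (nhds 0) := by
      have := Filter.Tendsto.const_add t hlim
      simpa using this
    exact (hg.tendsto 0).comp this
  have h2 : (fun n => g (t + u n)) = fun _ => g t := by
    funext n; exact hper _ (hu n) t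
  rw [h2] at h1
  exact tendsto_nhds_unique tendsto_const_nhds h1
end
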